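/- If a and b are coprime positive integers, then for every sequence (s_1, ..., s_b) of nonnegative integers summing to a, there is exactly one cyclic rotation (s_{k+1}, ..., s_b, s_1, ..., s_k) such that the lattice path N^{s_1}E N^{s_2}E ... N^{s_b}E built from the rotated sequence stays weakly above the line y = (a/b)x. -/

import Mathlib

open Finset


/-- The cycle lemma: for coprime positive integers `a` and `b` and any sequence
`s : Fin b → ℕ` of nonnegative integers summing to `a`, there is exactly one
cyclic rotation of `s` whose associated lattice path
`N^{s_{k+1}} E ⋯ N^{s_b} E N^{s_1} E ⋯ N^{s_k} E` stays weakly above the line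
`y = (a/b)x`; by coprimality, the interior condition is the strict inequality
`b * (partial sum of the first j rotated entries) > a * j` for `1 ≤ j ≤ b - 1`. -/
theorem cycle_lemma (a b : ℕ) (ha : 0 < a) (hb : 0 < b) (hab : Nat.Coprime a b)
    (s : Fin b → ℕ) (hs : ∑ i, s i = a) :
    ∃! k : Fin b, ∀ j : ℕ, 1 ≤ j → j ≤ b - 1 →
      b * (∑ i ∈ Finset.range j, s ⟨((k : ℕ) + i) % b, Nat.mod_lt _ hb⟩) > a * j := by
  haveI : NeZero b := ⟨hb.ne'⟩
  set f : ℕ → ℕ := fun i => s ⟨i % b, Nat.mod_lt _ hb⟩ with hf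
  set S : ℕ → ℕ := fun m => ∑ i ∈ Finset.range m, f i with hSdef
  set g : ℕ → ℤ := fun m => (b : ℤ) * S m - a * m with hg
  have hblock : ∀ m : ℕ, ∑ i ∈ Finset.range b, f (m + i) = a := by
    intro m
    rw [← hs, ← Fin.sum_univ_eq_sum_range (fun i => f (m + i))]
    have key : ∀ i : Fin b, f (m + (i : ℕ)) = s ((⟨m % b, Nat.mod_lt _ hb⟩ : Fin b) + i) := by
      intro i
      simp only [hf]
      congr 1
      ext
      simp only [Fin.add_def]
      rw [Nat.add_mod m i b, Nat.mod_eq_of_lt i.isLt]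
    simp_rw [key]
    exact Equiv.sum_comp (Equiv.addLeft (⟨m % b, Nat.mod_lt _ hb⟩ : Fin b)) s
  have hSadd : ∀ m j : ℕ, S (m + j) = S m + ∑ i ∈ Finset.range j, f (m + i) := by
    intro m j
    simpa [hSdef] using Finset.sum_range_add f m j
  have hgper : ∀ m, g (m + b) = g m := by
    intro m
    simp only [hg]
    rw [hSadd m b, hblock m]
    push_cast
    ring
  have hgmod : ∀ m, g m = g (m % b) := by
    intro m
    conv_lhs => rw [← Nat.mod_add_div m b]
    generalize m / b = q
    induction q with
    | zero => simp
    | succ q ih =>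
      rw [Nat.mul_succ, ← Nat.add_assoc, hgper, ih]
  have hginj : ∀ m m' : ℕ, g m = g m' → m % b = m' % b := by
    intro m m' h
    simp only [hg] at h
    have hdvd : (b : ℤ) ∣ (a : ℤ) * ((m : ℤ) - (m' : ℤ)) := by
      refine ⟨(S m : ℤ) - (S m' : ℤ), ?_⟩
      linarith [h]
    have hco : IsCoprime (b : ℤ) (a : ℤ) := by
      rw [Int.isCoprime_iff_gcd_eq_one]
      simpa [Nat.Coprime, Nat.gcd_comm] using hab
    have hdvd2 : (b : ℤ) ∣ ((m : ℤ) - (m' : ℤ)) := hco.dvd_of_dvd_mul_left hdvd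
    have h2 : (m' : ℤ) % b = (m : ℤ) % b := Int.modEq_iff_dvd.mpr hdvd2
    rw [← Int.natCast_mod, ← Int.natCast_mod] at h2
    exact_mod_cast h2.symm
  have hcond : ∀ (k j : ℕ),
      (b * (∑ i ∈ Finset.range j, s ⟨(k + i) % b, Nat.mod_lt _ hb⟩) > a * j)
        ↔ g k < g (k + j) := by
    intro k j
    have h1 : S (k + j) = S k + ∑ i ∈ Finset.range j, s ⟨(k + i) % b, Nat.mod_lt _ hb⟩ :=
      hSadd k j
    set Sn := ∑ i ∈ Finset.range j, s ⟨(k + i) % b, Nat.mod_lt _ hb⟩ with hSn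
    simp only [hg]
    rw [h1]
    push_cast
    constructor <;> intro h
    · have h' : (a : ℤ) * j < (b : ℤ) * Sn := by exact_mod_cast h
      linarith
    · have h' : (a : ℤ) * j < (b : ℤ) * Sn := by linarith
      exact_mod_cast h'
  obtain ⟨k0, hk0mem, hk0min⟩ :=
    Finset.exists_min_image (Finset.range b) g ⟨0, Finset.mem_range.2 hb⟩
  have hk0lt : k0 < b := Finset.mem_range.1 hk0mem
  refine ⟨⟨k0, hk0lt⟩, ?_, ?_⟩
  · intro j hj1 hj2
    rw [hcond k0 j]
    have hge : g k0 ≤ g ((k0 + j) % b) :=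
      hk0min _ (Finset.mem_range.2 (Nat.mod_lt _ hb))
    have hge2 : g k0 ≤ g (k0 + j) := by rw [hgmod (k0 + j)]; exact hge
    rcases lt_or_eq_of_le hge2 with h | h
    · exact h
    · exfalso
      have hmm := hginj _ _ h
      rw [Nat.mod_eq_of_lt hk0lt] at hmm
      rcases lt_or_ge (k0 + j) b with hc | hc
      · rw [Nat.mod_eq_of_lt hc] at hmm; omega
      · rw [Nat.mod_eq_sub_mod hc, Nat.mod_eq_of_lt (by omega)] at hmm; omega
  · intro k hk
    by_contra hne
    have hkb : (k : ℕ) < b := k.isLt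
    have hkne : (k : ℕ) ≠ k0 := fun h => hne (by ext; simp [h])
    -- choose j
    set j : ℕ := if (k : ℕ) < k0 then k0 - k else k0 + b - k with hj
    have hj1 : 1 ≤ j := by simp only [hj]; split <;> omega
    have hj2 : j ≤ b - 1 := by simp only [hj]; split <;> omega
    have hmod : ((k : ℕ) + j) % b = k0 := by
      simp only [hj]
      split
      · rw [show (k : ℕ) + (k0 - k) = k0 by omega, Nat.mod_eq_of_lt hk0lt]
      · rw [show (k : ℕ) + (k0 + b - k) = k0 + b by omega, Nat.add_mod_right,
          Nat.mod_eq_of_lt hk0lt]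
    have h1 := (hcond k j).mp (hk j hj1 hj2)
    have h2 : g ((k : ℕ) + j) = g k0 := by rw [hgmod, hmod]
    have h3 : g k0 ≤ g (k : ℕ) := hk0min _ (Finset.mem_range.2 hkb)
    rw [h2] at h1
    linarith
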